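/- arXiv:1603.06103 — 2 statements merged into one kernel-verified Lean document; each statement's English description precedes it below -/
import Mathlib

section
/- Let k be a field and φ(x) = p(x)/q(x) ∈ k(x) a rational function of degree d > 1 with p, q coprime polynomials, and suppose the derivative φ' is not identically zero. Let t be transcendental over k. Then for every n ≥ 1, the polynomial p_n(x) − t·q_n(x) ∈ k(t)[x] is separable, where p_n/q_n is the n-th iterate φ^n written in lowest terms. -/
open Polynomial

/-- Composition of rational functions `f ∘ g`, computed via the homogenized
numerator and denominator of `f` (which are coprime) evaluated at `g.num/g.denom`. -/
noncomputable def ratComp {k : Type*} [Field k] (f g : RatFunc k) : RatFunc k :=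
  let p := f.num
  let q := f.denom
  let d := max p.natDegree q.natDegree
  algebraMap (Polynomial k) (RatFunc k)
      (∑ i ∈ Finset.range (d + 1), C (p.coeff i) * g.num ^ i * g.denom ^ (d - i)) /
    algebraMap (Polynomial k) (RatFunc k)
      (∑ i ∈ Finset.range (d + 1), C (q.coeff i) * g.num ^ i * g.denom ^ (d - i))

/-- The `n`-th iterate `φ^n` of a rational function `φ`. -/
noncomputable def ratIter {k : Type*} [Field k] (φ : RatFunc k) : ℕ → RatFunc k
  | 0 => RatFunc.X
  | n + 1 => ratComp φ (ratIter φ n)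

namespace RatIterAux

variable {k : Type*} [Field k]

local notation "ι" => algebraMap (Polynomial k) (RatFunc k)

lemma ι_inj : Function.Injective (algebraMap (Polynomial k) (RatFunc k)) :=
  IsFractionRing.injective _ _

lemma ι_ne {p : Polynomial k} (h : p ≠ 0) : ι p ≠ 0 := by
  simpa [map_eq_zero_iff _ ι_inj] using h

lemma algC (c : k) : algebraMap k (RatFunc k) c = ι (C c) := by
  rw [IsScalarTower.algebraMap_apply k (Polynomial k) (RatFunc k), Polynomial.algebraMap_eq]

/-- The "Wronskian" numerator of the derivative of a rational function. -/
noncomputable def Wr (f : RatFunc k) : Polynomial k :=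
  f.denom * f.num.derivative - f.num * f.denom.derivative

/-- The derivative of a rational function. -/
noncomputable def Dr (f : RatFunc k) : RatFunc k := ι (Wr f) / ι (f.denom ^ 2)

lemma exists_common (f : RatFunc k) {a b : Polynomial k} (hb : b ≠ 0)
    (hf : f = ι a / ι b) :
    ∃ e : Polynomial k, e ≠ 0 ∧ a = f.num * e ∧ b = f.denom * e := by
  have h1 : ι a / ι b = ι f.num / ι f.denom := by rw [← hf, f.num_div_denom]
  have h2 : ι a * ι f.denom = ι f.num * ι b :=
    (div_eq_div_iff (ι_ne hb) (ι_ne f.denom_ne_zero)).mp h1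
  have hcross : a * f.denom = f.num * b := ι_inj (by rw [map_mul, map_mul]; exact h2)
  by_cases hn : f.num = 0
  · have hf0 : f = 0 := RatFunc.num_eq_zero_iff.mp hn
    have ha : a = 0 := by
      have := hcross
      rw [hn, zero_mul] at this
      exact (mul_eq_zero.mp this).resolve_right f.denom_ne_zero
    refine ⟨b, hb, ?_, ?_⟩
    · rw [ha, hn, zero_mul]
    · rw [hf0, RatFunc.denom_zero, one_mul]
  · have hdvd : f.num ∣ a := by
      have : f.num ∣ a * f.denom := ⟨b, hcross⟩
      exact (f.isCoprime_num_denom).dvd_of_dvd_mul_right this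
    obtain ⟨e, he⟩ := hdvd
    have hbe : b = f.denom * e := by
      have h3 : f.num * (f.denom * e) = f.num * b := by
        rw [← hcross, he]; ring
      exact (mul_left_cancel₀ hn h3).symm
    have he0 : e ≠ 0 := by
      rintro rfl
      rw [mul_zero] at hbe
      exact hb hbe
    exact ⟨e, he0, he, hbe⟩

lemma Dr_frac {a b : Polynomial k} (hb : b ≠ 0) :
    Dr (ι a / ι b) = ι (b * a.derivative - a * b.derivative) / ι (b ^ 2) := by
  obtain ⟨e, he, ha, hbe⟩ := exists_common (ι a / ι b) hb rfl
  set f : RatFunc k := ι a / ι b with hf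
  have h1 : b * a.derivative - a * b.derivative = e ^ 2 * Wr f := by
    rw [ha, hbe, Wr]
    rw [derivative_mul, derivative_mul]
    ring
  have h2 : b ^ 2 = e ^ 2 * f.denom ^ 2 := by rw [hbe]; ring
  rw [h1, h2, map_mul, map_mul,
    mul_div_mul_left _ _ (ι_ne (pow_ne_zero 2 he))]
  rfl

lemma Dr_algebraMap (p : Polynomial k) : Dr (ι p) = ι p.derivative := by
  have h : ι p = ι p / ι 1 := by simp
  rw [h, Dr_frac one_ne_zero]
  simp

lemma Dr_ne_zero_iff {f : RatFunc k} : Dr f ≠ 0 ↔ Wr f ≠ 0 := by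
  rw [Dr, div_ne_zero_iff]
  constructor
  · rintro ⟨h, -⟩
    intro h0
    exact h (by rw [h0, map_zero])
  · intro h
    exact ⟨ι_ne h, ι_ne (pow_ne_zero 2 f.denom_ne_zero)⟩

lemma Dr_add (f g : RatFunc k) : Dr (f + g) = Dr f + Dr g := by
  have h1 : f + g = ι (f.num * g.denom + f.denom * g.num) / ι (f.denom * g.denom) := by
    conv_lhs => rw [← f.num_div_denom, ← g.num_div_denom]
    rw [div_add_div _ _ (ι_ne f.denom_ne_zero) (ι_ne g.denom_ne_zero), map_add, map_mul,
      map_mul, map_mul]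
  rw [h1, Dr_frac (mul_ne_zero f.denom_ne_zero g.denom_ne_zero), Dr, Dr]
  have hf := ι_ne f.denom_ne_zero
  have hg := ι_ne g.denom_ne_zero
  simp only [Wr, derivative_add, derivative_mul, map_add, map_sub, map_mul, map_pow]
  field_simp
  ring

lemma Dr_mul (f g : RatFunc k) : Dr (f * g) = f * Dr g + g * Dr f := by
  have hf' : f = ι f.num / ι f.denom := f.num_div_denom.symm
  have hg' : g = ι g.num / ι g.denom := g.num_div_denom.symm
  rw [hf', hg', div_mul_div_comm, ← map_mul, ← map_mul,
    Dr_frac (mul_ne_zero f.denom_ne_zero g.denom_ne_zero), Dr_frac f.denom_ne_zero,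
    Dr_frac g.denom_ne_zero]
  have hf := ι_ne f.denom_ne_zero
  have hg := ι_ne g.denom_ne_zero
  simp only [derivative_mul, map_add, map_sub, map_mul, map_pow]
  set A := ι f.num; set B := ι f.denom; set Cc := ι g.num; set D := ι g.denom
  field_simp
  ring

lemma Dr_div (u v : RatFunc k) (hv : v ≠ 0) :
    Dr (u / v) = (v * Dr u - u * Dr v) / v ^ 2 := by
  have h : u = u / v * v := (div_mul_cancel₀ u hv).symm
  have h2 : Dr u = u / v * Dr v + v * Dr (u / v) := by
    conv_lhs => rw [h]
    rw [Dr_mul]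
  rw [h2]
  field_simp
  ring

lemma Dr_const (c : k) : Dr (algebraMap k (RatFunc k) c) = 0 := by
  rw [algC, Dr_algebraMap, derivative_C, map_zero]

lemma Dr_ratC (c : k) : Dr (RatFunc.C c) = 0 := by
  rw [← RatFunc.algebraMap_C, Dr_algebraMap, derivative_C, map_zero]

lemma Dr_aeval (g : RatFunc k) (p : Polynomial k) :
    Dr (aeval g p) = aeval g (derivative p) * Dr g := by
  induction p using Polynomial.induction_on with
  | C a => simp [Dr_ratC]
  | add p q hp hq => rw [map_add, Dr_add, hp, hq, derivative_add, map_add]; ring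
  | monomial n a ih =>
    have h : (C a * X ^ (n + 1) : Polynomial k) = C a * X ^ n * X := by ring
    rw [h, map_mul, Dr_mul, ih, aeval_X]
    simp only [derivative_mul, derivative_X, derivative_C, derivative_X_pow, map_add, map_mul,
      map_pow, aeval_X, aeval_C, map_natCast, zero_mul, zero_add, mul_one]
    ring

lemma homog_eq (p : Polynomial k) (g : RatFunc k) (d : ℕ) (hd : p.natDegree < d + 1) :
    ι (∑ i ∈ Finset.range (d + 1), C (p.coeff i) * g.num ^ i * g.denom ^ (d - i)) =
      aeval g p * ι (g.denom ^ d) := by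
  rw [aeval_eq_sum_range' hd, Finset.sum_mul, map_sum]
  refine Finset.sum_congr rfl fun i hi => ?_
  have hle : i ≤ d := Nat.lt_succ_iff.mp (Finset.mem_range.mp hi)
  have hy : ι g.denom ≠ 0 := ι_ne g.denom_ne_zero
  rw [map_mul, map_mul, map_pow, map_pow, map_pow, Algebra.smul_def, algC]
  have hgp : (g : RatFunc k) ^ i = (ι g.num) ^ i / (ι g.denom) ^ i := by
    rw [← div_pow, g.num_div_denom]
  rw [hgp]
  have hpow : (ι g.denom) ^ d = (ι g.denom) ^ (d - i) * (ι g.denom) ^ i := by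
    rw [← pow_add, Nat.sub_add_cancel hle]
  rw [hpow]
  set A := ι g.num
  set B := ι g.denom
  set E := ι (C (p.coeff i))
  field_simp

lemma ratComp_eq (f g : RatFunc k) :
    ratComp f g = aeval g f.num / aeval g f.denom := by
  have h1 : f.num.natDegree < max f.num.natDegree f.denom.natDegree + 1 :=
    Nat.lt_succ_of_le (le_max_left _ _)
  have h2 : f.denom.natDegree < max f.num.natDegree f.denom.natDegree + 1 :=
    Nat.lt_succ_of_le (le_max_right _ _)
  show ι _ / ι _ = _
  rw [homog_eq f.num g _ h1, homog_eq f.denom g _ h2,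
    mul_div_mul_right _ _ (ι_ne (pow_ne_zero _ g.denom_ne_zero))]

lemma aeval_ne {g : RatFunc k} (hg : 1 ≤ max g.num.natDegree g.denom.natDegree)
    {p : Polynomial k} (hp : p ≠ 0) : aeval g p ≠ 0 := by
  have key : (∑ i ∈ Finset.range (p.natDegree + 1),
      C (p.coeff i) * g.num ^ i * g.denom ^ (p.natDegree - i)) ≠ 0 := by
    rcases Nat.eq_zero_or_pos p.natDegree with h0 | hpos
    · rw [h0]
      simp only [zero_add, Finset.range_one, Finset.sum_singleton, pow_zero, mul_one, one_mul,
        Nat.sub_self]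
      rw [Ne, Polynomial.C_eq_zero]
      intro hc
      exact hp (by rw [eq_C_of_natDegree_eq_zero h0, hc, map_zero])
    · intro hsum
      by_cases hb : g.denom.natDegree = 0
      · have hb1 : g.denom = 1 := by
          have h1 : g.denom = C (g.denom.coeff 0) := eq_C_of_natDegree_eq_zero hb
          have h2 : g.denom.coeff 0 = 1 := by
            have h3 := g.monic_denom
            rwa [Polynomial.Monic, Polynomial.leadingCoeff, hb] at h3
          rw [h1, h2, map_one]
        have ha : 1 ≤ g.num.natDegree := by simpa [hb] using hg
        rw [hb1] at hsum
        simp only [one_pow, mul_one] at hsum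
        have hcomp : p.comp g.num = 0 := by
          rw [comp_eq_aeval, aeval_eq_sum_range' (Nat.lt_succ_self p.natDegree)]
          simpa [Polynomial.smul_eq_C_mul] using hsum
        rcases comp_eq_zero_iff.mp hcomp with h | ⟨-, hconst⟩
        · exact hp h
        · rw [hconst] at ha
          simp at ha
      · have hbne : ¬ IsUnit g.denom := fun h => hb (natDegree_eq_zero_of_isUnit h)
        obtain ⟨π, hπirr, hπdvd⟩ :=
          WfDvdMonoid.exists_irreducible_factor hbne g.denom_ne_zero
        have hπ : Prime π := hπirr.prime
        rw [Finset.sum_range_succ] at hsum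
        have hdvdsum : π ∣ ∑ i ∈ Finset.range p.natDegree,
            C (p.coeff i) * g.num ^ i * g.denom ^ (p.natDegree - i) :=
          Finset.dvd_sum fun i hi =>
            Dvd.dvd.mul_left
              (hπdvd.trans (dvd_pow_self _ (Nat.sub_ne_zero_of_lt (Finset.mem_range.mp hi)))) _
        have hlast : π ∣ C (p.coeff p.natDegree) * g.num ^ p.natDegree := by
          have h2 := eq_neg_of_add_eq_zero_right hsum
          rw [Nat.sub_self, pow_zero, mul_one] at h2
          rw [h2]
          exact dvd_neg.mpr hdvdsum
        rcases hπ.dvd_mul.mp hlast with h | h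
        · have hlc : p.coeff p.natDegree ≠ 0 := by
            rw [← Polynomial.leadingCoeff]
            exact Polynomial.leadingCoeff_ne_zero.mpr hp
          exact hπ.not_unit
            (isUnit_of_dvd_unit h (Polynomial.isUnit_C.mpr (isUnit_iff_ne_zero.mpr hlc)))
        · exact hπ.not_unit
            (g.isCoprime_num_denom.isUnit_of_dvd' (hπ.dvd_of_dvd_pow h) hπdvd)
  intro h0
  have h := homog_eq p g p.natDegree (Nat.lt_succ_self _)
  rw [h0, zero_mul] at h
  exact key (ι_inj (h.trans (map_zero _).symm))

variable (φ : RatFunc k)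

lemma iter_nonconst (hdeg : 1 < max φ.num.natDegree φ.denom.natDegree) :
    ∀ n, 1 ≤ max (ratIter φ n).num.natDegree (ratIter φ n).denom.natDegree := by
  intro n
  induction n with
  | zero =>
    show 1 ≤ max (RatFunc.X (K := k)).num.natDegree (RatFunc.X (K := k)).denom.natDegree
    rw [RatFunc.num_X, RatFunc.denom_X, Polynomial.natDegree_X, Polynomial.natDegree_one]
    omega
  | succ n ih =>
    by_contra hcon
    set h := ratIter φ (n + 1) with hh
    have hmax : max h.num.natDegree h.denom.natDegree = 0 := by omega
    have hnum0 : h.num.natDegree = 0 := by omega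
    have hden0 : h.denom.natDegree = 0 := by omega
    have hden1 : h.denom = 1 := by
      have h1 : h.denom = C (h.denom.coeff 0) := eq_C_of_natDegree_eq_zero hden0
      have h2 : h.denom.coeff 0 = 1 := by
        have h3 := h.monic_denom
        rwa [Polynomial.Monic, Polynomial.leadingCoeff, hden0] at h3
      rw [h1, h2, map_one]
    have hch : h = aeval (ratIter φ n) φ.num / aeval (ratIter φ n) φ.denom := by
      rw [hh]
      show ratComp φ (ratIter φ n) = _
      exact ratComp_eq φ (ratIter φ n)
    have hQ : aeval (ratIter φ n) φ.denom ≠ 0 := aeval_ne ih φ.denom_ne_zero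
    have hcr : h = ι (C (h.num.coeff 0)) := by
      conv_lhs => rw [← h.num_div_denom]
      rw [hden1, map_one, div_one, eq_C_of_natDegree_eq_zero hnum0, Polynomial.coeff_C_zero]
    have hzero : aeval (ratIter φ n) (φ.num - C (h.num.coeff 0) * φ.denom) = 0 := by
      rw [map_sub, map_mul, aeval_C, sub_eq_zero, algC]
      rw [hcr] at hch
      rw [eq_div_iff hQ] at hch
      rw [← hch]
    have heq : φ.num = C (h.num.coeff 0) * φ.denom := by
      have := aeval_ne ih (p := φ.num - C (h.num.coeff 0) * φ.denom)
      by_contra hne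
      exact this (sub_ne_zero.mpr hne) hzero
    have hU : IsUnit φ.denom :=
      φ.isCoprime_num_denom.isUnit_of_dvd' (Dvd.intro_left _ heq.symm) dvd_rfl
    have h1 : φ.denom.natDegree = 0 := natDegree_eq_zero_of_isUnit hU
    have h2 : φ.num.natDegree = 0 := by
      have h3 := Polynomial.natDegree_mul_le (p := C (h.num.coeff 0)) (q := φ.denom)
      rw [← heq] at h3
      simp [h1] at h3
      omega
    omega

lemma Wr_X : Wr (RatFunc.X (K := k)) = 1 := by
  rw [Wr, RatFunc.num_X, RatFunc.denom_X]
  simp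

lemma Wr_iter_ne (hdeg : 1 < max φ.num.natDegree φ.denom.natDegree)
    (hder : Wr φ ≠ 0) : ∀ n, Wr (ratIter φ n) ≠ 0 := by
  intro n
  induction n with
  | zero =>
    show Wr (RatFunc.X (K := k)) ≠ 0
    rw [Wr_X]
    exact one_ne_zero
  | succ n ih =>
    rw [← Dr_ne_zero_iff]
    set g := ratIter φ n with hgdef
    have hg := iter_nonconst φ hdeg n
    have hQ : aeval g φ.denom ≠ 0 := aeval_ne hg φ.denom_ne_zero
    have hstep : ratIter φ (n + 1) = aeval g φ.num / aeval g φ.denom := ratComp_eq φ g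
    rw [hstep, Dr_div _ _ hQ, Dr_aeval, Dr_aeval]
    have hnum : aeval g φ.denom * (aeval g (derivative φ.num) * Dr g) -
        aeval g φ.num * (aeval g (derivative φ.denom) * Dr g) = aeval g (Wr φ) * Dr g := by
      rw [Wr, map_sub, map_mul, map_mul]
      ring
    rw [hnum]
    exact div_ne_zero (mul_ne_zero (aeval_ne hg hder) (Dr_ne_zero_iff.mpr ih))
      (pow_ne_zero 2 hQ)

/-- The inclusion `k[x] → k[t][x]` sending the variable to the *outer* variable. -/
noncomputable def innerHom : Polynomial k →+* Polynomial (Polynomial k) :=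
  eval₂RingHom (Polynomial.C.comp Polynomial.C) Polynomial.X

/-- The variable-swapping homomorphism `k[t][x] → k[x][t]`. -/
noncomputable def swapHom : Polynomial (Polynomial k) →+* Polynomial (Polynomial k) :=
  eval₂RingHom (innerHom (k := k)) (Polynomial.C Polynomial.X)

lemma innerHom_C (a : k) : innerHom (k := k) (C a) = C (C a) := by
  rw [innerHom, coe_eval₂RingHom, eval₂_C, RingHom.comp_apply]

lemma innerHom_X : innerHom (k := k) X = X := by
  rw [innerHom, coe_eval₂RingHom, eval₂_X]

lemma swapHom_C (r : Polynomial k) : swapHom (k := k) (C r) = innerHom r := by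
  rw [swapHom, coe_eval₂RingHom, eval₂_C]

lemma swapHom_X : swapHom (k := k) X = C X := by
  rw [swapHom, coe_eval₂RingHom, eval₂_X]

lemma swapHom_comp_swapHom :
    (swapHom (k := k)).comp (swapHom (k := k)) = RingHom.id _ := by
  apply Polynomial.ringHom_ext
  · intro r
    show ((swapHom (k := k)).comp (swapHom (k := k))).comp Polynomial.C r = C r
    have hcomp : ((swapHom (k := k)).comp (swapHom (k := k))).comp Polynomial.C =
        Polynomial.C := by
      apply Polynomial.ringHom_ext
      · intro a
        simp [RingHom.comp_apply, swapHom_C, innerHom_C]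
      · simp [RingHom.comp_apply, swapHom_C, innerHom_X, swapHom_X]
    rw [hcomp]
  · simp [RingHom.comp_apply, swapHom_X, swapHom_C, innerHom_X]

/-- The variable-swapping ring equivalence on `k[t][x]`. -/
noncomputable def swapEquiv : Polynomial (Polynomial k) ≃+* Polynomial (Polynomial k) :=
  RingEquiv.ofRingHom (swapHom (k := k)) (swapHom (k := k))
    swapHom_comp_swapHom swapHom_comp_swapHom

lemma swapHom_map_C (p : Polynomial k) :
    swapHom (k := k) (p.map Polynomial.C) = Polynomial.C p := by
  have hcomp : (swapHom (k := k)).comp (mapRingHom Polynomial.C) = Polynomial.C := by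
    apply Polynomial.ringHom_ext
    · intro a
      simp [RingHom.comp_apply, coe_mapRingHom, map_C, swapHom_C, innerHom_C]
    · simp [RingHom.comp_apply, coe_mapRingHom, map_X, swapHom_X]
  have := RingHom.congr_fun hcomp p
  simpa [coe_mapRingHom] using this

lemma irreducible_linear {R : Type*} [CommRing R] [IsDomain R] {a b : R}
    (hco : IsCoprime a b) (hb : b ≠ 0) :
    Irreducible (Polynomial.C a + Polynomial.C b * Polynomial.X) := by
  have hdeg : (Polynomial.C a + Polynomial.C b * Polynomial.X).natDegree = 1 := by
    rw [add_comm]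
    exact natDegree_linear hb
  have hne : (Polynomial.C a + Polynomial.C b * Polynomial.X) ≠ 0 := by
    intro h
    rw [h] at hdeg
    simp at hdeg
  have key : ∀ f g : Polynomial R, Polynomial.C a + Polynomial.C b * Polynomial.X = f * g →
      f.natDegree = 0 → IsUnit f := by
    intro f g hfg hf0
    have hc : f = Polynomial.C (f.coeff 0) := eq_C_of_natDegree_eq_zero hf0
    have hfg' : Polynomial.C a + Polynomial.C b * Polynomial.X =
        Polynomial.C (f.coeff 0) * g := by rw [← hc]; exact hfg
    have h0 : a = f.coeff 0 * g.coeff 0 := by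
      simpa [coeff_C_mul] using congrArg (fun p => Polynomial.coeff p 0) hfg'
    have h1 : b = f.coeff 0 * g.coeff 1 := by
      simpa [coeff_C_mul] using congrArg (fun p => Polynomial.coeff p 1) hfg'
    have hu : IsUnit (f.coeff 0) := hco.isUnit_of_dvd' ⟨_, h0⟩ ⟨_, h1⟩
    rw [hc]
    exact Polynomial.isUnit_C.mpr hu
  refine ⟨fun h => ?_, fun f g hfg => ?_⟩
  · have := natDegree_eq_zero_of_isUnit h
    omega
  · have hf : f ≠ 0 := fun h => hne (by rw [hfg, h, zero_mul])
    have hgz : g ≠ 0 := fun h => hne (by rw [hfg, h, mul_zero])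
    have hsum : f.natDegree + g.natDegree = 1 := by
      rw [← Polynomial.natDegree_mul hf hgz, ← hfg, hdeg]
    rcases Nat.eq_zero_or_pos f.natDegree with h0 | hpos
    · exact Or.inl (key f g hfg h0)
    · have hg0 : g.natDegree = 0 := by omega
      exact Or.inr (key g f (by rw [hfg, mul_comm]) hg0)

lemma irreducible_target (hdeg : 1 < max φ.num.natDegree φ.denom.natDegree) (n : ℕ) :
    Irreducible ((ratIter φ n).num.map (algebraMap k (RatFunc k)) -
      Polynomial.C RatFunc.X * (ratIter φ n).denom.map (algebraMap k (RatFunc k))) := by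
  classical
  set N := (ratIter φ n).num with hN
  set Dq := (ratIter φ n).denom with hDq
  have hnc : 1 ≤ max N.natDegree Dq.natDegree := iter_nonconst φ hdeg n
  have hco : IsCoprime N Dq := (ratIter φ n).isCoprime_num_denom
  have hDqne : Dq ≠ 0 := (ratIter φ n).denom_ne_zero
  set F : Polynomial (Polynomial k) :=
    N.map Polynomial.C - Polynomial.C Polynomial.X * Dq.map Polynomial.C with hF
  -- F maps to the target polynomial
  have hmap : F.map (algebraMap (Polynomial k) (RatFunc k)) =
      N.map (algebraMap k (RatFunc k)) -
        Polynomial.C RatFunc.X * Dq.map (algebraMap k (RatFunc k)) := by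
    rw [hF, Polynomial.map_sub, Polynomial.map_mul, Polynomial.map_map, Polynomial.map_map,
      Polynomial.map_C, RatFunc.algebraMap_X]
    have hcc : (algebraMap (Polynomial k) (RatFunc k)).comp Polynomial.C =
        algebraMap k (RatFunc k) := RingHom.ext fun a => by
      rw [RingHom.comp_apply, ← Polynomial.algebraMap_eq, ← IsScalarTower.algebraMap_apply]
    rw [hcc]
  -- coefficients of F
  have hcoef : ∀ i, F.coeff i =
      Polynomial.C (N.coeff i) - Polynomial.X * Polynomial.C (Dq.coeff i) := by
    intro i
    rw [hF, Polynomial.coeff_sub, Polynomial.coeff_map, Polynomial.coeff_C_mul,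
      Polynomial.coeff_map]
  -- the coefficient vectors of N and Dq are not proportional
  have claim : ∃ i j, Dq.coeff j * N.coeff i - Dq.coeff i * N.coeff j ≠ 0 := by
    by_contra hcon
    push_neg at hcon
    set j0 := Dq.natDegree with hj0
    have hq0 : Dq.coeff j0 ≠ 0 := by
      rw [hj0, ← Polynomial.leadingCoeff]
      exact Polynomial.leadingCoeff_ne_zero.mpr hDqne
    have heq : N * Polynomial.C (Dq.coeff j0) = Dq * Polynomial.C (N.coeff j0) := by
      ext i
      rw [Polynomial.coeff_mul_C, Polynomial.coeff_mul_C]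
      have := hcon i j0
      have h2 := sub_eq_zero.mp this
      linear_combination h2
    have h3 : N = Dq * Polynomial.C (N.coeff j0 * (Dq.coeff j0)⁻¹) := by
      have h4 : N * (Polynomial.C (Dq.coeff j0) * Polynomial.C (Dq.coeff j0)⁻¹) =
          Dq * (Polynomial.C (N.coeff j0) * Polynomial.C (Dq.coeff j0)⁻¹) := by
        rw [← mul_assoc, ← mul_assoc, heq]
      rw [← Polynomial.C_mul, mul_inv_cancel₀ hq0, Polynomial.C_1, mul_one, ← Polynomial.C_mul]
        at h4
      exact h4
    have hdvd : Dq ∣ N := ⟨_, h3⟩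
    have hU : IsUnit Dq := hco.isUnit_of_dvd' hdvd dvd_rfl
    have h1 : Dq.natDegree = 0 := natDegree_eq_zero_of_isUnit hU
    have h2 : N.natDegree = 0 := by
      have h5 := Polynomial.natDegree_mul_le (p := Dq)
        (q := Polynomial.C (N.coeff j0 * (Dq.coeff j0)⁻¹))
      rw [← h3] at h5
      simp only [Polynomial.natDegree_C, h1, add_zero] at h5
      omega
    omega
  obtain ⟨i, j, hij⟩ := claim
  -- primitivity of F
  have hprim : F.IsPrimitive := by
    intro r hr
    have hri := (Polynomial.C_dvd_iff_dvd_coeff r F).mp hr i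
    have hrj := (Polynomial.C_dvd_iff_dvd_coeff r F).mp hr j
    have hcomb : r ∣ Polynomial.C (Dq.coeff j) * F.coeff i -
        Polynomial.C (Dq.coeff i) * F.coeff j :=
      dvd_sub (hri.mul_left _) (hrj.mul_left _)
    have hval : Polynomial.C (Dq.coeff j) * F.coeff i -
        Polynomial.C (Dq.coeff i) * F.coeff j =
        Polynomial.C (Dq.coeff j * N.coeff i - Dq.coeff i * N.coeff j) := by
      rw [hcoef i, hcoef j, Polynomial.C_sub, Polynomial.C_mul, Polynomial.C_mul]
      ring
    rw [hval] at hcomb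
    exact isUnit_of_dvd_unit hcomb
      (Polynomial.isUnit_C.mpr (isUnit_iff_ne_zero.mpr hij))
  -- irreducibility of F via the swap
  have hswap : swapHom (k := k) F =
      Polynomial.C N + Polynomial.C (-Dq) * Polynomial.X := by
    rw [hF, map_sub, map_mul, swapHom_map_C, swapHom_map_C, swapHom_C, innerHom_X,
      Polynomial.C_neg]
    ring
  have hirrswap : Irreducible (swapHom (k := k) F) := by
    rw [hswap]
    exact irreducible_linear (hco.neg_right) (neg_ne_zero.mpr hDqne)
  have hirrF : Irreducible F := by
    have : swapEquiv (k := k) F = swapHom (k := k) F := rfl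
    rw [← MulEquiv.irreducible_iff (swapEquiv (k := k))]
    rw [show swapEquiv (k := k) F = swapHom (k := k) F from rfl]
    exact hirrswap
  rw [← hmap]
  exact hprim.irreducible_iff_irreducible_map_fraction_map.mp hirrF

end RatIterAux

/-- If `φ = p/q` has degree `d > 1` and `φ' ≠ 0`, then for every `n ≥ 1` the
polynomial `p_n(x) - t·q_n(x)` over `k(t)` is separable, where `p_n/q_n` is the
`n`-th iterate `φ^n` in lowest terms (here `t` is `RatFunc.X`). -/
theorem stmt_10 {k : Type*} [Field k] (φ : RatFunc k)
    (hdeg : 1 < max φ.num.natDegree φ.denom.natDegree)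
    (hder : φ.denom * φ.num.derivative - φ.num * φ.denom.derivative ≠ 0) :
    ∀ n : ℕ, 1 ≤ n →
      (((ratIter φ n).num.map (algebraMap k (RatFunc k)) -
          C RatFunc.X * (ratIter φ n).denom.map (algebraMap k (RatFunc k)))).Separable := by
  intro n hn
  have hW : RatIterAux.Wr (ratIter φ n) ≠ 0 := RatIterAux.Wr_iter_ne φ hdeg hder n
  have hirr := RatIterAux.irreducible_target φ hdeg n
  rw [Polynomial.separable_iff_derivative_ne_zero hirr]
  intro h0
  set N := (ratIter φ n).num with hN
  set Dq := (ratIter φ n).denom with hDq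
  have hd : Polynomial.derivative (N.map (algebraMap k (RatFunc k)) -
      C RatFunc.X * Dq.map (algebraMap k (RatFunc k))) =
      (Polynomial.derivative N).map (algebraMap k (RatFunc k)) -
        C RatFunc.X * (Polynomial.derivative Dq).map (algebraMap k (RatFunc k)) := by
    rw [derivative_sub, derivative_mul, derivative_C, zero_mul, zero_add, derivative_map,
      derivative_map]
  rw [hd] at h0
  have hc : ∀ j : ℕ, algebraMap k (RatFunc k) ((Polynomial.derivative N).coeff j) =
      RatFunc.X * algebraMap k (RatFunc k) ((Polynomial.derivative Dq).coeff j) := by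
    intro j
    have h := congrArg (fun p => Polynomial.coeff p j) h0
    simp only [Polynomial.coeff_sub, Polynomial.coeff_map, Polynomial.coeff_C_mul,
      Polynomial.coeff_zero] at h
    exact sub_eq_zero.mp h
  have hDq' : Polynomial.derivative Dq = 0 := by
    by_contra hne
    obtain ⟨j, hj⟩ : ∃ j, (Polynomial.derivative Dq).coeff j ≠ 0 := by
      by_contra hall
      push_neg at hall
      exact hne (Polynomial.ext fun j => by simp [hall j])
    have hb : algebraMap k (RatFunc k) ((Polynomial.derivative Dq).coeff j) ≠ 0 := by
      intro hz
      exact hj ((algebraMap k (RatFunc k)).injective (hz.trans (map_zero _).symm))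
    have hXc : RatFunc.X = algebraMap k (RatFunc k)
        ((Polynomial.derivative N).coeff j * ((Polynomial.derivative Dq).coeff j)⁻¹) := by
      rw [map_mul, map_inv₀]
      rw [hc j, mul_assoc, mul_inv_cancel₀ hb, mul_one]
    have := congrArg RatFunc.num hXc
    rw [RatFunc.num_X, RatIterAux.algC, RatFunc.num_algebraMap] at this
    exact Polynomial.X_ne_C _ this
  have hN' : Polynomial.derivative N = 0 := by
    ext j
    have h := hc j
    rw [hDq'] at h
    simp only [Polynomial.coeff_zero, map_zero, mul_zero] at h
    simpa using (algebraMap k (RatFunc k)).injective (h.trans (map_zero _).symm)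
  apply hW
  rw [RatIterAux.Wr, ← hN, ← hDq, hN', hDq']
  ring
end

section
/- Fix d ≥ 2 and ε > 0. There exists N such that for every transitive subgroup H of S_d and every σ ∈ S_d such that the coset Hσ (inside the subgroup generated by H and σ) contains at least one fixed-point-free permutation, the N-fold composition of the indicatrix Φ_{Hσ} satisfies Φ_{Hσ}^N(0) > 1 − ε. -/
open Finset

namespace Stmt12

variable {d : ℕ}

section counting
variable (H : Subgroup (Equiv.Perm (Fin d))) [Fintype H]

lemma card_T_const (htr : ∀ a b : Fin d, ∃ h ∈ H, h a = b) (a b a' b' : Fin d) :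
    (univ.filter fun h : H => h.1 a = b).card
      = (univ.filter fun h : H => h.1 a' = b').card := by
  obtain ⟨g, hgH, hg⟩ := htr b b'
  obtain ⟨j, hjH, hj⟩ := htr a' a
  apply Finset.card_bij' (fun h _ => (⟨g, hgH⟩ : H) * h * ⟨j, hjH⟩)
    (fun h _ => (⟨g, hgH⟩ : H)⁻¹ * h * (⟨j, hjH⟩ : H)⁻¹)
  · intro h hh
    simp only [mem_filter, mem_univ, true_and] at hh ⊢
    simp [Subgroup.coe_mul, Equiv.Perm.mul_apply, hj, hh, hg]
  · intro h hh
    simp only [mem_filter, mem_univ, true_and] at hh ⊢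
    have : (g⁻¹ : Equiv.Perm (Fin d)) b' = b := by
      rw [← hg]; simp
    have hj' : (j⁻¹ : Equiv.Perm (Fin d)) a = a' := by
      rw [← hj]; simp
    simp [Subgroup.coe_mul, Equiv.Perm.mul_apply, hj', hh, this]
  · intro h _; group
  · intro h _; group

lemma sum_card_T (a : Fin d) :
    ∑ b : Fin d, (univ.filter fun h : H => h.1 a = b).card = Fintype.card H := by
  rw [← Finset.card_univ (α := H)]
  rw [Finset.card_eq_sum_card_fiberwise (f := fun h : H => h.1 a) (t := univ)
    (fun x _ => mem_univ _)]

lemma burnside' (σ : Equiv.Perm (Fin d)) (htr : ∀ a b : Fin d, ∃ h ∈ H, h a = b) (hd : 0 < d) :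
    ∑ h : H, (univ.filter fun s : Fin d => (h.1 * σ) s = s).card = Fintype.card H := by
  have h0 : (0 : ℕ) < d := hd
  have a0 : Fin d := ⟨0, h0⟩
  calc ∑ h : H, (univ.filter fun s : Fin d => (h.1 * σ) s = s).card
      = ∑ h : H, ∑ s : Fin d, if (h.1 * σ) s = s then 1 else 0 := by
        refine Finset.sum_congr rfl fun h _ => ?_
        rw [Finset.card_filter]
    _ = ∑ s : Fin d, ∑ h : H, if (h.1 * σ) s = s then 1 else 0 := Finset.sum_comm
    _ = ∑ s : Fin d, (univ.filter fun h : H => h.1 (σ s) = s).card := by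
        refine Finset.sum_congr rfl fun s _ => ?_
        rw [Finset.card_filter]
        exact Finset.sum_congr rfl fun h _ => by simp [Equiv.Perm.mul_apply]; congr
    _ = ∑ s : Fin d, (univ.filter fun h : H => h.1 a0 = a0).card := by
        refine Finset.sum_congr rfl fun s _ => card_T_const H htr _ _ _ _
    _ = ∑ b : Fin d, (univ.filter fun h : H => h.1 a0 = b).card := by
        refine Finset.sum_congr rfl fun b _ => card_T_const H htr _ _ _ _
    _ = Fintype.card H := sum_card_T H a0

end counting

section analysis
variable (H : Subgroup (Equiv.Perm (Fin d))) [Fintype H] (σ : Equiv.Perm (Fin d))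

lemma key (hd : 2 ≤ d) (htr : ∀ a b : Fin d, ∃ h ∈ H, h a = b)
    (hfpf : ∃ h ∈ H, ∀ s : Fin d, (h * σ) s ≠ s) (ε : ℝ) (hε : 0 < ε) :
    ∃ N : ℕ, ∀ M : ℕ, N ≤ M →
      1 - ε < (fun x : ℝ => (1 / (Nat.card H : ℝ)) *
        ∑ h : H, x ^ (Finset.univ.filter fun s : Fin d => (h.1 * σ) s = s).card)^[M] 0 := by
  classical
  set m : H → ℕ := fun h => (Finset.univ.filter fun s : Fin d => (h.1 * σ) s = s).card with hm
  set c : ℕ := Fintype.card H with hcdef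
  have hc : 0 < c := Fintype.card_pos
  have hcR : (0:ℝ) < (c:ℝ) := by exact_mod_cast hc
  have hnc : (Nat.card H : ℝ) = (c:ℝ) := by rw [Nat.card_eq_fintype_card]
  set f : ℝ → ℝ := fun x => (1 / (Nat.card H : ℝ)) * ∑ h : H, x ^ m h with hf
  have hbn : ∑ h : H, m h = c := burnside' H σ htr (by omega)
  have hsum_m : ∑ h : H, (m h : ℝ) = (c:ℝ) := by
    rw [← Nat.cast_sum]; exact_mod_cast hbn
  -- existence of h₁ with 2 ≤ m h₁
  obtain ⟨h₀, hh₀H, hh₀⟩ := hfpf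
  have hm0 : m ⟨h₀, hh₀H⟩ = 0 := by
    rw [hm]
    simp only [Finset.card_eq_zero, Finset.filter_eq_empty_iff]
    exact fun s _ => hh₀ s
  have hex2 : ∃ h : H, 2 ≤ m h := by
    by_contra hcon
    push_neg at hcon
    have hlt : ∑ h : H, m h < ∑ _h : H, 1 :=
      Finset.sum_lt_sum (fun i _ => by have := hcon i; omega)
        ⟨⟨h₀, hh₀H⟩, Finset.mem_univ _, by rw [hm0]; norm_num⟩
    rw [hbn] at hlt
    simp [hcdef] at hlt
  obtain ⟨h₁, hh₁⟩ := hex2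
  -- key inequality
  have hkey : ∀ x : ℝ, 0 ≤ x → x < 1 → x < f x := by
    intro x hx0 hx1
    have ht : ∀ h : H, 0 ≤ x ^ m h - 1 - (m h : ℝ) * (x - 1) := by
      intro h
      have hg : x ^ m h - 1 = (∑ i ∈ Finset.range (m h), x ^ i) * (x - 1) :=
        (geom_sum_mul x (m h)).symm
      have hle : ∑ i ∈ Finset.range (m h), x ^ i ≤ (m h : ℝ) := by
        calc ∑ i ∈ Finset.range (m h), x ^ i ≤ ∑ _i ∈ Finset.range (m h), (1:ℝ) :=
              Finset.sum_le_sum fun i _ => pow_le_one₀ hx0 hx1.le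
          _ = (m h : ℝ) := by simp
      nlinarith
    have ht1 : 0 < x ^ m h₁ - 1 - (m h₁ : ℝ) * (x - 1) := by
      have hg : x ^ m h₁ - 1 = (∑ i ∈ Finset.range (m h₁), x ^ i) * (x - 1) :=
        (geom_sum_mul x (m h₁)).symm
      have hlt : ∑ i ∈ Finset.range (m h₁), x ^ i < (m h₁ : ℝ) := by
        calc ∑ i ∈ Finset.range (m h₁), x ^ i < ∑ _i ∈ Finset.range (m h₁), (1:ℝ) :=
              Finset.sum_lt_sum (fun i _ => pow_le_one₀ hx0 hx1.le)
                ⟨1, Finset.mem_range.2 (by omega), by simpa using hx1⟩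
          _ = (m h₁ : ℝ) := by simp
      nlinarith
    have hsumpos : 0 < ∑ h : H, (x ^ m h - 1 - (m h : ℝ) * (x - 1)) :=
      Finset.sum_pos' (fun i _ => ht i) ⟨h₁, Finset.mem_univ _, ht1⟩
    have hexp : ∑ h : H, (x ^ m h - 1 - (m h : ℝ) * (x - 1))
        = (∑ h : H, x ^ m h) - (c:ℝ) * x := by
      rw [Finset.sum_sub_distrib, Finset.sum_sub_distrib, ← Finset.sum_mul, hsum_m]
      simp [hcdef]
      ring
    rw [hexp] at hsumpos
    have hfin : x < (1/(c:ℝ)) * ∑ h : H, x ^ m h := by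
      have hlt : (c:ℝ) * x < ∑ h : H, x ^ m h := by linarith
      calc x = (1/(c:ℝ)) * ((c:ℝ) * x) := by field_simp
        _ < (1/(c:ℝ)) * ∑ h : H, x ^ m h :=
            mul_lt_mul_of_pos_left hlt (by positivity)
    show x < (1 / (Nat.card H : ℝ)) * ∑ h : H, x ^ m h
    rw [hnc]; exact hfin
  -- basic bounds on f
  have hf0 : ∀ x : ℝ, 0 ≤ x → 0 ≤ f x := by
    intro x hx
    show 0 ≤ (1 / (Nat.card H : ℝ)) * ∑ h : H, x ^ m h
    have : 0 ≤ ∑ h : H, x ^ m h := Finset.sum_nonneg fun h _ => pow_nonneg hx _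
    positivity
  have hf1 : f 1 = 1 := by
    show (1 / (Nat.card H : ℝ)) * ∑ h : H, (1:ℝ) ^ m h = 1
    rw [hnc]
    simp [hcdef]
  have hfle : ∀ x : ℝ, 0 ≤ x → x ≤ 1 → f x ≤ 1 := by
    intro x hx0 hx1
    have : f x ≤ f 1 := by
      show (1 / (Nat.card H : ℝ)) * ∑ h : H, x ^ m h
        ≤ (1 / (Nat.card H : ℝ)) * ∑ h : H, (1:ℝ) ^ m h
      apply mul_le_mul_of_nonneg_left
      · exact Finset.sum_le_sum fun h _ => pow_le_pow_left₀ hx0 hx1 _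
      · rw [hnc]; positivity
    linarith [hf1 ▸ this]
  -- the sequence
  set a : ℕ → ℝ := fun n => f^[n] 0 with ha
  have hstep : ∀ n, a (n+1) = f (a n) := fun n => Function.iterate_succ_apply' f n 0
  have hbd : ∀ n, 0 ≤ a n ∧ a n ≤ 1 := by
    intro n
    induction n with
    | zero => simp [ha]
    | succ k ih =>
        rw [hstep]
        exact ⟨hf0 _ ih.1, hfle _ ih.1 ih.2⟩
  have hmono : Monotone a := by
    apply monotone_nat_of_le_succ
    intro n
    rw [hstep]
    rcases (hbd n).2.lt_or_eq with h | h
    · exact (hkey _ (hbd n).1 h).le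
    · rw [h, hf1]
  have hbdd : BddAbove (Set.range a) := ⟨1, by rintro y ⟨n, rfl⟩; exact (hbd n).2⟩
  have htend : Filter.Tendsto a Filter.atTop (nhds (⨆ n, a n)) :=
    tendsto_atTop_ciSup hmono hbdd
  set L : ℝ := ⨆ n, a n with hL
  have hfc : Continuous f := by
    apply Continuous.mul continuous_const
    exact continuous_finset_sum _ fun i _ => continuous_pow _
  have hfL : f L = L := by
    have h1 : Filter.Tendsto (fun n => f (a n)) Filter.atTop (nhds (f L)) :=
      (hfc.tendsto L).comp htend
    have h2 : Filter.Tendsto (fun n => a (n+1)) Filter.atTop (nhds L) :=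
      htend.comp (Filter.tendsto_add_atTop_nat 1)
    have : (fun n => f (a n)) = fun n => a (n+1) := funext fun n => (hstep n).symm
    rw [this] at h1
    exact tendsto_nhds_unique h1 h2
  have hL0 : 0 ≤ L := le_trans (by simp [ha]) (le_ciSup hbdd 0)
  have hL1 : L ≤ 1 := ciSup_le fun n => (hbd n).2
  have hLeq : L = 1 := by
    by_contra hne
    have hlt : L < 1 := lt_of_le_of_ne hL1 hne
    exact absurd hfL (ne_of_gt (hkey L hL0 hlt))
  rw [hLeq] at htend
  have hev : ∀ᶠ n in Filter.atTop, 1 - ε < a n :=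
    htend.eventually (eventually_gt_nhds (by linarith))
  obtain ⟨N, hN⟩ := hev.exists
  exact ⟨N, fun M hM => lt_of_lt_of_le hN (hmono hM)⟩

end analysis

noncomputable def Phi (H : Subgroup (Equiv.Perm (Fin d))) (σ : Equiv.Perm (Fin d)) :
    ℝ → ℝ := fun x =>
  letI : Fintype H := Fintype.ofFinite _
  (1 / (Nat.card H : ℝ)) *
    ∑ h : H, x ^ (Finset.univ.filter fun s : Fin d => (h.1 * σ) s = s).card

lemma phi_eq (H : Subgroup (Equiv.Perm (Fin d))) [inst : Fintype H]
    (σ : Equiv.Perm (Fin d)) :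
    (fun x : ℝ => (1 / (Nat.card H : ℝ)) *
      ∑ h : H, x ^ (Finset.univ.filter fun s : Fin d => (h.1 * σ) s = s).card)
      = Phi H σ := by
  have h : inst = Fintype.ofFinite _ := Subsingleton.elim _ _
  subst h
  rfl

lemma key_Phi (H : Subgroup (Equiv.Perm (Fin d))) (σ : Equiv.Perm (Fin d))
    (hd : 2 ≤ d) (htr : ∀ a b : Fin d, ∃ h ∈ H, h a = b)
    (hfpf : ∃ h ∈ H, ∀ s : Fin d, (h * σ) s ≠ s) (ε : ℝ) (hε : 0 < ε) :
    ∃ N : ℕ, ∀ M : ℕ, N ≤ M → 1 - ε < (Phi H σ)^[M] 0 := by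
  letI : Fintype H := Fintype.ofFinite _
  rw [← phi_eq H σ]
  exact key H σ hd htr hfpf ε hε

end Stmt12

/-- For `d ≥ 2` and `ε > 0` there is an `N`, uniform over all transitive
subgroups `H ≤ S_d` and all `σ ∈ S_d` such that the coset `Hσ` contains a
fixed-point-free permutation, with `Φ_{Hσ}^N(0) > 1 - ε`, where `Φ_{Hσ}` is the
indicatrix of the coset `Hσ`. -/
theorem stmt_12 (d : ℕ) (hd : 2 ≤ d) (ε : ℝ) (hε : 0 < ε) :
    ∃ N : ℕ, ∀ (H : Subgroup (Equiv.Perm (Fin d))) (_ : Fintype H)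
      (σ : Equiv.Perm (Fin d)),
      (∀ a b : Fin d, ∃ h ∈ H, h a = b) →
      (∃ h ∈ H, ∀ s : Fin d, (h * σ) s ≠ s) →
      1 - ε < (fun x : ℝ => (1 / (Nat.card H : ℝ)) *
          ∑ h : H, x ^ (Finset.univ.filter fun s : Fin d => (h.1 * σ) s = s).card)^[N] 0 := by
  classical
  haveI : Fintype (Subgroup (Equiv.Perm (Fin d))) := Fintype.ofFinite _
  set Np : Subgroup (Equiv.Perm (Fin d)) × Equiv.Perm (Fin d) → ℕ := fun p =>
    if h : (∀ a b : Fin d, ∃ g ∈ p.1, g a = b) ∧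
        (∃ g ∈ p.1, ∀ s : Fin d, (g * p.2) s ≠ s)
    then (Stmt12.key_Phi p.1 p.2 hd h.1 h.2 ε hε).choose else 0 with hNp
  refine ⟨Finset.univ.sup Np, ?_⟩
  intro H instH σ h1 h2
  rw [Stmt12.phi_eq H σ]
  have hspec := (Stmt12.key_Phi H σ hd h1 h2 ε hε).choose_spec
  have hle : Np (H, σ) ≤ Finset.univ.sup Np := Finset.le_sup (Finset.mem_univ _)
  have heq : Np (H, σ) = (Stmt12.key_Phi H σ hd h1 h2 ε hε).choose := by
    rw [hNp]
    exact dif_pos ⟨h1, h2⟩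
  rw [heq] at hle
  exact hspec _ hle
end
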